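/- Let z ∈ ℂ with Im z ≠ 0 and let R > 1 be real. Define Δt = 4·|Im z|·R/(R² − 1) and z_c = 2i·(Im z)/Δt. Then the Bernstein radius of the local preimage satisfies ρ(z_c) = |z_c + √(z_c+1)·√(z_c−1)| = R. -/

import Mathlib

open Complex

/-- The Bernstein radius `ρ(z) = |z + √(z+1)·√(z−1)|`, where the square roots
are principal complex square roots (argument in `(−π, π]`). -/
noncomputable def bernsteinRadius (z : ℂ) : ℝ :=
  ‖z + (z + 1) ^ ((1 : ℂ) / 2) * (z - 1) ^ ((1 : ℂ) / 2)‖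

lemma sqrt_re_im_pos {z : ℂ} (hz : 0 < z.im) :
    0 < (z ^ ((1:ℂ)/2)).re ∧ 0 < (z ^ ((1:ℂ)/2)).im := by
  have hz0 : z ≠ 0 := fun h => by simp [h] at hz
  have harg1 : 0 < z.arg := by
    rcases lt_or_eq_of_le (Complex.arg_nonneg_iff.2 hz.le) with h | h
    · exact h
    · exact absurd (Complex.arg_eq_zero_iff.1 h.symm).2 hz.ne'
  have harg2 : z.arg < Real.pi := Complex.arg_lt_pi_iff.2 (Or.inr hz.ne')
  rw [Complex.cpow_def_of_ne_zero hz0]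
  have him : (Complex.log z * (1/2)).im = z.arg / 2 := by
    simp [Complex.mul_im, Complex.log_im, Complex.log_re]; ring
  have hpi := Real.pi_pos
  constructor
  · rw [Complex.exp_re, him]
    have : Real.cos (z.arg / 2) > 0 :=
      Real.cos_pos_of_mem_Ioo ⟨by linarith, by linarith⟩
    positivity
  · rw [Complex.exp_im, him]
    have : Real.sin (z.arg / 2) > 0 :=
      Real.sin_pos_of_pos_of_lt_pi (by linarith) (by linarith)
    positivity

lemma sqrt_re_pos_im_neg {z : ℂ} (hz : z.im < 0) :
    0 < (z ^ ((1:ℂ)/2)).re ∧ (z ^ ((1:ℂ)/2)).im < 0 := by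
  have hz0 : z ≠ 0 := fun h => by simp [h] at hz
  have harg1 : z.arg < 0 := Complex.arg_neg_iff.2 hz
  have harg2 : -Real.pi < z.arg := Complex.neg_pi_lt_arg z
  rw [Complex.cpow_def_of_ne_zero hz0]
  have him : (Complex.log z * (1/2)).im = z.arg / 2 := by
    simp [Complex.mul_im, Complex.log_im, Complex.log_re]; ring
  have hpi := Real.pi_pos
  constructor
  · rw [Complex.exp_re, him]
    have : Real.cos (z.arg / 2) > 0 :=
      Real.cos_pos_of_mem_Ioo ⟨by linarith, by linarith⟩
    positivity
  · rw [Complex.exp_im, him]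
    have hs : Real.sin (z.arg / 2) < 0 := by
      have := Real.sin_neg_of_neg_of_neg_pi_lt (x := z.arg / 2) (by linarith) (by linarith)
      exact this
    have he : 0 < Real.exp (Complex.log z * (1/2)).re := Real.exp_pos _
    nlinarith

lemma bern_I_mul (c : ℝ) (hc : c ≠ 0) :
    bernsteinRadius (Complex.I * c) = |c| + Real.sqrt (c^2 + 1) := by
  set u : ℂ := Complex.I * c + 1 with hu
  set v : ℂ := Complex.I * c - 1 with hv
  have huim : u.im = c := by simp [hu]
  have hvim : v.im = c := by simp [hv]
  set w : ℂ := u ^ ((1:ℂ)/2) * v ^ ((1:ℂ)/2) with hw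
  have hw2 : w ^ 2 = -((c:ℂ)^2 + 1) := by
    have h2 : ((1:ℂ)/2) = ((2:ℕ):ℂ)⁻¹ := by norm_num
    have hu2 : (u ^ ((1:ℂ)/2)) ^ 2 = u := by
      rw [h2]; exact Complex.cpow_nat_inv_pow u two_ne_zero
    have hv2 : (v ^ ((1:ℂ)/2)) ^ 2 = v := by
      rw [h2]; exact Complex.cpow_nat_inv_pow v two_ne_zero
    rw [hw, mul_pow, hu2, hv2, hu, hv]
    ring_nf
    simp [Complex.I_sq]
    ring
  have hsq : Real.sqrt (c^2+1) ^ 2 = c^2 + 1 :=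
    Real.sq_sqrt (by positivity)
  have key : w = Complex.I * (Real.sign c * Real.sqrt (c^2+1)) := by
    have hwim : w.im * Real.sign c > 0 := by
      rcases hc.lt_or_gt with h | h
      · have h1 := sqrt_re_pos_im_neg (z := u) (by rw [huim]; exact h)
        have h2 := sqrt_re_pos_im_neg (z := v) (by rw [hvim]; exact h)
        have : w.im < 0 := by
          rw [hw, Complex.mul_im]; nlinarith [h1.1, h1.2, h2.1, h2.2]
        rw [Real.sign_of_neg h]; nlinarith
      · have h1 := sqrt_re_im_pos (z := u) (by rw [huim]; exact h)
        have h2 := sqrt_re_im_pos (z := v) (by rw [hvim]; exact h)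
        have : 0 < w.im := by
          rw [hw, Complex.mul_im]; nlinarith [h1.1, h1.2, h2.1, h2.2]
        rw [Real.sign_of_pos h]; nlinarith
    -- from w^2 real negative and im w ≠ 0 deduce re w = 0
    have hre : (w^2).im = 0 := by rw [hw2, show ((c:ℂ)^2+1) = ((c^2+1 : ℝ):ℂ) by push_cast; ring]; simp [← Complex.ofReal_pow]
    have him2 : (w^2).im = 2 * w.re * w.im := by
      rw [sq, Complex.mul_im]; ring
    have hwim0 : w.im ≠ 0 := by
      intro h; rw [h] at hwim; simp at hwim
    have hwre : w.re = 0 := by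
      have := hre; rw [him2] at this
      rcases mul_eq_zero.1 (by linarith : 2 * w.re * w.im = 0) with h | h
      · rcases mul_eq_zero.1 h with h' | h'
        · norm_num at h'
        · exact h'
      · exact absurd h hwim0
    have hre2 : (w^2).re = -(c^2+1) := by rw [hw2, show ((c:ℂ)^2+1) = ((c^2+1 : ℝ):ℂ) by push_cast; ring]; simp [← Complex.ofReal_pow]
    have him2' : (w^2).re = w.re^2 - w.im^2 := by
      rw [sq, Complex.mul_re]; ring
    have hwimsq : w.im^2 = c^2+1 := by
      rw [him2', hwre] at hre2; nlinarith
    have habs : |w.im| = Real.sqrt (c^2+1) := by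
      rw [← Real.sqrt_sq_eq_abs, hwimsq]
    apply Complex.ext
    · simp [hwre]
    · simp only [Complex.mul_im, Complex.I_re, Complex.I_im]
      rcases hc.lt_or_gt with h | h
      · rw [Real.sign_of_neg h] at hwim ⊢
        have : w.im < 0 := by nlinarith
        push_cast
        rw [abs_of_neg this] at habs
        simp
        linarith
      · rw [Real.sign_of_pos h] at hwim ⊢
        have : 0 < w.im := by nlinarith
        push_cast
        rw [abs_of_pos this] at habs
        simp
        linarith
  rw [bernsteinRadius, ← hu]
  have : Complex.I * c - 1 = v := rfl
  rw [this, ← hw, key]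
  have : Complex.I * (c:ℂ) + Complex.I * (((Real.sign c : ℝ) : ℂ) * ((Real.sqrt (c^2+1) : ℝ) : ℂ)) =
      Complex.I * ((c + Real.sign c * Real.sqrt (c^2+1) : ℝ) : ℂ) := by
    push_cast; ring
  rw [this, norm_mul, Complex.norm_I, one_mul, Complex.norm_real, Real.norm_eq_abs]
  have hs1 : (1:ℝ) ≤ Real.sqrt (c^2+1) := by
    nlinarith [Real.sqrt_nonneg (c^2+1), Real.sq_sqrt (by positivity : (0:ℝ) ≤ c^2+1)]
  rcases hc.lt_or_gt with h | h
  · rw [Real.sign_of_neg h, abs_of_neg h]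
    rw [abs_of_neg (by nlinarith)]
    ring
  · rw [Real.sign_of_pos h, abs_of_pos h]
    rw [abs_of_pos (by nlinarith)]
    ring

theorem stmt_7 (z : ℂ) (hz : z.im ≠ 0) (R : ℝ) (hR : 1 < R) :
    bernsteinRadius (2 * Complex.I * (z.im : ℂ) /
        ((4 * |z.im| * R / (R ^ 2 - 1) : ℝ) : ℂ)) = R := by
  set d : ℝ := 4 * |z.im| * R / (R ^ 2 - 1) with hd
  have hy : 0 < |z.im| := abs_pos.2 hz
  have hR2 : 0 < R ^ 2 - 1 := by nlinarith
  have hd0 : 0 < d := by rw [hd]; positivity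
  set c : ℝ := 2 * z.im / d with hc
  have hc0 : c ≠ 0 := by
    rw [hc]; exact div_ne_zero (by simpa using hz) hd0.ne'
  have harg : 2 * Complex.I * (z.im : ℂ) / (d : ℂ) = Complex.I * (c : ℂ) := by
    rw [hc]; push_cast
    field_simp
  rw [harg, bern_I_mul c hc0]
  have habs : |c| = (R^2 - 1) / (2 * R) := by
    rw [hc, abs_div, abs_of_pos hd0, abs_mul, show |(2:ℝ)| = 2 from abs_two, hd,
      div_div_eq_mul_div, div_eq_div_iff (by positivity) (by positivity)]
    ring
  have hsq : Real.sqrt (c^2 + 1) = (R^2 + 1) / (2 * R) := by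
    have h1 : c^2 + 1 = ((R^2 + 1)/(2*R))^2 := by
      rw [← _root_.sq_abs c, habs]
      field_simp
      ring
    rw [h1, Real.sqrt_sq (by positivity)]
  rw [habs, hsq]
  field_simp
  ring
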